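/- In $W_n$, the elements $m_n$ defined by $m_1 = 1$, $m_2 = a_1$, and the recursion arising from the Markov map satisfy $m_{n+1} = x_n^2 m_n x_n^{-1}$ for all $n \geq 1$. -/
import Mathlib


/-- Leaves of the complete binary rooted tree of height `n`, recorded as the
big-endian bit string of the (0-indexed) leaf label. -/
abbrev Leaf (n : ℕ) := Fin n → Bool

/-- The function underlying the standard generator `a k` of `Aut(T_n)`:
it flips coordinate `n - k` of a leaf lying on the leftmost spine above level `n - k`
(this is the permutation `(1, 2^(k-1)+1)(2, 2^(k-1)+2) ⋯ (2^(k-1), 2^k)` of the leaves). -/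
def aFun (n k : ℕ) (ℓ : Leaf n) : Leaf n := fun t =>
  if (t : ℕ) = n - k ∧ (∀ s : Fin n, (s : ℕ) < n - k → ℓ s = false) then !(ℓ t) else ℓ t

lemma aFun_apply (n k : ℕ) (ℓ : Leaf n) (t : Fin n) :
    aFun n k ℓ t =
      if (t : ℕ) = n - k ∧ (∀ s : Fin n, (s : ℕ) < n - k → ℓ s = false) then !(ℓ t) else ℓ t :=
  rfl

lemma aFun_spine (n k : ℕ) (ℓ : Leaf n) (s : Fin n) (hs : (s : ℕ) < n - k) :
    aFun n k ℓ s = ℓ s := by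
  rw [aFun_apply, if_neg]
  rintro ⟨h1, -⟩
  omega

lemma aFun_cond (n k : ℕ) (ℓ : Leaf n) (t : Fin n) :
    ((t : ℕ) = n - k ∧ (∀ s : Fin n, (s : ℕ) < n - k → aFun n k ℓ s = false)) ↔
    ((t : ℕ) = n - k ∧ (∀ s : Fin n, (s : ℕ) < n - k → ℓ s = false)) := by
  constructor
  · rintro ⟨h1, h2⟩
    refine ⟨h1, fun s hs => ?_⟩
    have h := h2 s hs
    rwa [aFun_spine n k ℓ s hs] at h
  · rintro ⟨h1, h2⟩
    refine ⟨h1, fun s hs => ?_⟩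
    rw [aFun_spine n k ℓ s hs]
    exact h2 s hs

lemma aFun_involutive (n k : ℕ) : Function.Involutive (aFun n k) := by
  intro ℓ
  funext t
  rw [show aFun n k (aFun n k ℓ) t =
    (if (t : ℕ) = n - k ∧ (∀ s : Fin n, (s : ℕ) < n - k → aFun n k ℓ s = false)
      then !(aFun n k ℓ t) else aFun n k ℓ t) from rfl]
  by_cases h : (t : ℕ) = n - k ∧ (∀ s : Fin n, (s : ℕ) < n - k → ℓ s = false)
  · rw [if_pos ((aFun_cond n k ℓ t).mpr h), aFun_apply, if_pos h, Bool.not_not]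
  · rw [if_neg (fun hc => h ((aFun_cond n k ℓ t).mp hc)), aFun_apply, if_neg h]

/-- The standard generator `a_k` of `Aut(T_n)` (as a permutation of the leaves). -/
def aPerm (n k : ℕ) : Equiv.Perm (Leaf n) :=
  Function.Involutive.toPerm (aFun n k) (aFun_involutive n k)

lemma aPerm_apply (n k : ℕ) (ℓ : Leaf n) : aPerm n k ℓ = aFun n k ℓ := rfl

/-- The automorphism group `W_n` of the complete binary rooted tree of height `n`,
realized as the subgroup of permutations of the `2^n` leaves which, at every level `m`,
map leaves agreeing in their first `m` coordinates to leaves agreeing in their first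
`m` coordinates. -/
def treeGroup (n : ℕ) : Subgroup (Equiv.Perm (Leaf n)) where
  carrier := {σ | ∀ m : ℕ, ∀ i j : Leaf n,
    (∀ t : Fin n, (t : ℕ) < m → σ i t = σ j t) ↔ (∀ t : Fin n, (t : ℕ) < m → i t = j t)}
  one_mem' := by intro m i j; simp
  mul_mem' := by
    intro a b ha hb m i j
    simpa [Equiv.Perm.mul_apply] using (ha m (b i) (b j)).trans (hb m i j)
  inv_mem' := by
    intro a ha m i j
    simpa using (ha m (a⁻¹ i) (a⁻¹ j)).symm

lemma mem_treeGroup (n : ℕ) (σ : Equiv.Perm (Leaf n)) :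
    σ ∈ treeGroup n ↔ ∀ m : ℕ, ∀ i j : Leaf n,
      (∀ t : Fin n, (t : ℕ) < m → σ i t = σ j t) ↔ (∀ t : Fin n, (t : ℕ) < m → i t = j t) :=
  Iff.rfl

lemma aPerm_mem (n k : ℕ) : aPerm n k ∈ treeGroup n := by
  have D : ∀ (i j : Leaf n) (m : ℕ), (∀ t : Fin n, (t : ℕ) < m → i t = j t) →
      (∀ t : Fin n, (t : ℕ) < m → aFun n k i t = aFun n k j t) := by
    intro i j m hij t ht
    rw [aFun_apply, aFun_apply]
    by_cases h1 : (t : ℕ) = n - k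
    · have hsp : (∀ s : Fin n, (s : ℕ) < n - k → i s = false) ↔
          (∀ s : Fin n, (s : ℕ) < n - k → j s = false) := by
        constructor
        · intro h s hs
          rw [← hij s (by omega)]; exact h s hs
        · intro h s hs
          rw [hij s (by omega)]; exact h s hs
      by_cases h2 : ∀ s : Fin n, (s : ℕ) < n - k → i s = false
      · rw [if_pos ⟨h1, h2⟩, if_pos ⟨h1, hsp.mp h2⟩, hij t ht]
      · rw [if_neg (fun hc => h2 hc.2), if_neg (fun hc => h2 (hsp.mpr hc.2)), hij t ht]
    · rw [if_neg (fun hc => h1 hc.1), if_neg (fun hc => h1 hc.1), hij t ht]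
  rw [mem_treeGroup]
  intro m i j
  constructor
  · intro h t ht
    have h2 := D (aPerm n k i) (aPerm n k j) m (fun t ht => by
      simpa [aPerm_apply] using h t ht) t ht
    rwa [show aFun n k (aPerm n k i) = i from aFun_involutive n k i,
      show aFun n k (aPerm n k j) = j from aFun_involutive n k j] at h2
  · intro h t ht
    simpa [aPerm_apply] using D i j m h t ht

/-- The standard generator `a_k` as an element of `W_n`. -/
def aEl (n k : ℕ) : ↥(treeGroup n) := ⟨aPerm n k, aPerm_mem n k⟩

/-- The standard `k`-odometer `x_k = a_1 a_2 ⋯ a_k`, viewed inside `W_n`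
(via the natural inclusion of `W_k` acting on the left part of the tree). -/
def xEl (n k : ℕ) : ↥(treeGroup n) :=
  (((List.range k).map fun j => aEl n (j + 1))).prod

/-- `v_i = x_{i+2}^2`, viewed inside `W_n`. -/
def vEl (n i : ℕ) : ↥(treeGroup n) := (xEl n (i + 2)) ^ 2

/-- `m_n = a_{n-1} (x_{n-2})^{x_n}` (with `g^h = h g h⁻¹`), viewed inside `W_n`. -/
def mEl (n : ℕ) : ↥(treeGroup n) :=
  aEl n (n - 1) * (xEl n n * xEl n (n - 2) * (xEl n n)⁻¹)

/-- A permutation of the leaves of `T_n` is an `n`-odometer if it acts transitively on them. -/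
def IsOdometer (n : ℕ) (σ : Equiv.Perm (Leaf n)) : Prop :=
  ∀ i j : Leaf n, ∃ t : ℕ, (σ ^ t) i = j

/-- The generating set `{v_i : i ≤ k - 3}` of `V_k`, inside `W_n`. -/
def VsetK (n k : ℕ) : Set ↥(treeGroup n) := {g | ∃ i : ℕ, i + 3 ≤ k ∧ g = vEl n i}

/-- The subgroup `V_k = ⟨v_{k-3}, …, v_0⟩ ≤ W_n`. -/
def VgrpK (n k : ℕ) : Subgroup ↥(treeGroup n) := Subgroup.closure (VsetK n k)

/-- The group `M_k = ⟨x_k, v_{k-3}, …, v_0⟩` of Section 4, inside `W_n`. -/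
def MgrpK (n k : ℕ) : Subgroup ↥(treeGroup n) :=
  Subgroup.closure (insert (xEl n k) (VsetK n k))

/-- The normal closure `N_k = V_k^{M_k}` of `V_k` in `M_k`, inside `W_n`. -/
def NgrpK (n k : ℕ) : Subgroup ↥(treeGroup n) :=
  Subgroup.closure {g | ∃ m ∈ MgrpK n k, ∃ v ∈ VsetK n k, g = m * v * m⁻¹}

/-- The group `M_n = ⟨x_n, m_n, v_{n-3}, …, v_0⟩` of Section 5. -/
def MgrpB (n : ℕ) : Subgroup ↥(treeGroup n) :=
  Subgroup.closure (insert (xEl n n) (insert (mEl n) (VsetK n n)))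

/-- The normal closure `N_n = ⟨m_n, v_{n-3}, …, v_0⟩^{M_n}` of Section 5. -/
def NgrpB (n : ℕ) : Subgroup ↥(treeGroup n) :=
  Subgroup.closure {g | ∃ m ∈ MgrpB n, ∃ h ∈ insert (mEl n) (VsetK n n), g = m * h * m⁻¹}

/-- `U_n = V_n^{⟨x_n⟩}`. -/
def Ugrp (n : ℕ) : Subgroup ↥(treeGroup n) :=
  Subgroup.closure {g | ∃ m ∈ Subgroup.closure {xEl n n}, ∃ v ∈ VsetK n n, g = m * v * m⁻¹}


/-- The auxiliary sequence `β_j = α_{j+3}` with `α_3 = 1` and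
`α_{n+1} = (x_{n-3} α_n)^{a_{n-1}}` (conjugation `g^h = h g h⁻¹`). -/
def betaSeq (N : ℕ) : ℕ → ↥(treeGroup N)
  | 0 => 1
  | j + 1 => aEl N (j + 2) * (xEl N j * betaSeq N j) * (aEl N (j + 2))⁻¹

/-- The sequence `m_n` of Section 6: `m_1 = 1`, `m_2 = a_1`, and
`m_n = x_{n-3} α_n a_{n-1}` for `n ≥ 3`. -/
def mSeq (N : ℕ) : ℕ → ↥(treeGroup N)
  | 0 => 1
  | 1 => 1
  | 2 => aEl N 1
  | j + 3 => xEl N j * betaSeq N j * aEl N (j + 2)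

section Aux

lemma aEl_mul_self (N m : ℕ) : aEl N m * aEl N m = 1 := by
  refine Subtype.ext (Equiv.ext fun ℓ => ?_)
  exact aFun_involutive N m ℓ

lemma aEl_inv (N m : ℕ) : (aEl N m)⁻¹ = aEl N m :=
  inv_eq_of_mul_eq_one_left (aEl_mul_self N m)

lemma xEl_zero (N : ℕ) : xEl N 0 = 1 := by simp [xEl]

lemma xEl_succ (N k : ℕ) : xEl N (k + 1) = xEl N k * aEl N (k + 1) := by
  simp [xEl, List.range_succ]

/-- `σ` fixes every leaf having a `true` coordinate among the first `s+1`. -/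
def FixHi (N s : ℕ) (σ : Equiv.Perm (Leaf N)) : Prop :=
  ∀ ℓ : Leaf N, (∃ t : Fin N, (t : ℕ) ≤ s ∧ ℓ t = true) → σ ℓ = ℓ

lemma FixHi.one (N s : ℕ) : FixHi N s 1 := fun _ _ => rfl

lemma FixHi.mul {N s : ℕ} {σ τ : Equiv.Perm (Leaf N)} (hσ : FixHi N s σ) (hτ : FixHi N s τ) :
    FixHi N s (σ * τ) := by
  intro ℓ h
  rw [Equiv.Perm.mul_apply, hτ ℓ h, hσ ℓ h]

lemma FixHi.inv {N s : ℕ} {σ : Equiv.Perm (Leaf N)} (hσ : FixHi N s σ) :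
    FixHi N s σ⁻¹ := by
  intro ℓ h
  have := hσ ℓ h
  nth_rewrite 1 [← this]
  simp

lemma fixHi_aPerm {N s m : ℕ} (h : s < N - m) : FixHi N s (aPerm N m) := by
  rintro ℓ ⟨t, ht, htt⟩
  funext u
  rw [aPerm_apply, aFun_apply, if_neg]
  rintro ⟨-, h2⟩
  have := h2 t (by omega)
  rw [htt] at this
  exact Bool.true_eq_false.mp this

lemma fixHi_xEl {N s : ℕ} : ∀ k : ℕ, s + k < N → FixHi N s ((xEl N k : ↥(treeGroup N)) : Equiv.Perm (Leaf N))
  | 0, _ => by rw [xEl_zero]; exact FixHi.one N s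
  | k + 1, h => by
      rw [xEl_succ]
      exact FixHi.mul (fixHi_xEl k (by omega)) (fixHi_aPerm (by omega))

lemma fixHi_betaSeq {N s : ℕ} : ∀ j : ℕ, s + (j + 1) < N →
    FixHi N s ((betaSeq N j : ↥(treeGroup N)) : Equiv.Perm (Leaf N))
  | 0, _ => FixHi.one N s
  | j + 1, h => by
      show FixHi N s ((aEl N (j+2) * (xEl N j * _root_.betaSeq N j) * (aEl N (j+2))⁻¹ :
        ↥(treeGroup N)) : Equiv.Perm (Leaf N))
      push_cast
      exact FixHi.mul (FixHi.mul (fixHi_aPerm (by omega))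
        (FixHi.mul (fixHi_xEl j (by omega)) (fixHi_betaSeq j (by omega))))
        (FixHi.inv (fixHi_aPerm (by omega)))

/-- The key disjointness: `a_{k+1} σ a_{k+1}⁻¹` commutes with anything supported on the
deep-left subtree. -/
lemma comm_key {N k : ℕ} (hk : k + 2 ≤ N) (σ τ : ↥(treeGroup N))
    (hσ : FixHi N (N - (k+1)) (σ : Equiv.Perm (Leaf N)))
    (hτ : FixHi N (N - (k+1)) (τ : Equiv.Perm (Leaf N))) :
    (aEl N (k+1) * σ * (aEl N (k+1))⁻¹) * τ = τ * (aEl N (k+1) * σ * (aEl N (k+1))⁻¹) := by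
  set s := N - (k + 1) with hs
  have hsN : s < N := by omega
  refine Subtype.ext ?_
  push_cast
  have hdisj : (aPerm N (k+1) * (σ : Equiv.Perm (Leaf N)) * (aPerm N (k+1))⁻¹).Disjoint
      (τ : Equiv.Perm (Leaf N)) := by
    intro ℓ
    by_cases h : ∃ t : Fin N, (t : ℕ) ≤ s ∧ ℓ t = true
    · right; exact hτ ℓ h
    · left
      push_neg at h
      have hfalse : ∀ t : Fin N, (t : ℕ) ≤ s → ℓ t = false := by
        intro t ht
        have := h t ht
        exact Bool.not_eq_true _ |>.mp this
      have hinv : (aPerm N (k+1))⁻¹ = aPerm N (k+1) := by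
        refine Equiv.ext fun x => ?_
        have : aPerm N (k+1) ((aPerm N (k+1)) x) = x := aFun_involutive N (k+1) x
        nth_rewrite 1 [← this]
        simp
      rw [Equiv.Perm.mul_apply, Equiv.Perm.mul_apply, hinv]
      have hcoord : aPerm N (k+1) ℓ ⟨s, hsN⟩ = true := by
        rw [aPerm_apply, aFun_apply, if_pos]
        · rw [hfalse ⟨s, hsN⟩ le_rfl]; rfl
        · exact ⟨rfl, fun t ht => hfalse t (le_of_lt ht)⟩
      rw [hσ (aPerm N (k+1) ℓ) ⟨⟨s, hsN⟩, le_rfl, hcoord⟩]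
      exact aFun_involutive N (k+1) ℓ
  exact (hdisj.commute).eq

/-- Pure group algebra behind the recursion. -/
lemma grpLem {G : Type*} [Group G] (X1 A2 A3 d : G) (h2 : A2 * A2 = 1) (h3 : A3 * A3 = 1)
    (hc : (A3 * (X1 * A2) * A3⁻¹) * (d * A2) = (d * A2) * (A3 * (X1 * A2) * A3⁻¹)) :
    (X1 * A2 * A3) ^ 2 * (d * A2) * (X1 * A2 * A3)⁻¹ = X1 * (A2 * d * A2⁻¹) * A3 := by
  have h2' : A2⁻¹ = A2 := inv_eq_of_mul_eq_one_left h2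
  have h3' : A3⁻¹ = A3 := inv_eq_of_mul_eq_one_left h3
  rw [mul_inv_eq_iff_eq_mul, sq]
  simp only [h2', h3', mul_assoc] at hc ⊢
  apply mul_left_cancel (a := X1⁻¹)
  simp only [← mul_assoc, inv_mul_cancel, one_mul]
  simp only [mul_assoc]
  apply mul_left_cancel (a := A2⁻¹)
  simp only [← mul_assoc, h2', mul_assoc]
  rw [hc]

end Aux
/-- the elements `m_n` satisfy `m_{n+1} = x_n² m_n x_n⁻¹` for all `n ≥ 1`
(the identity being read in `W_{n+1}`). -/
theorem mSeq_rec (n : ℕ) (hn : 1 ≤ n) :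
    mSeq (n + 1) (n + 1) = (xEl (n + 1) n) ^ 2 * mSeq (n + 1) n * (xEl (n + 1) n)⁻¹ := by
  match n, hn with
  | 1, _ =>
    show aEl 2 1 = (xEl 2 1) ^ 2 * 1 * (xEl 2 1)⁻¹
    rw [xEl_succ, xEl_zero, one_mul]
    group
  | 2, _ =>
    have hc := comm_key (N := 3) (k := 1) (by omega) (xEl 3 1) (1 * aEl 3 1)
      (fixHi_xEl 1 (by omega))
      (by
        push_cast
        exact FixHi.mul (FixHi.one 3 1) (fixHi_aPerm (by omega)))
    rw [show xEl 3 1 = xEl 3 0 * aEl 3 1 from xEl_succ 3 0] at hc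
    have h := grpLem (xEl 3 0) (aEl 3 1) (aEl 3 2) 1 (aEl_mul_self 3 1) (aEl_mul_self 3 2) hc
    rw [one_mul, mul_one, mul_inv_cancel, mul_one] at h
    show xEl 3 0 * betaSeq 3 0 * aEl 3 2 = (xEl 3 2) ^ 2 * aEl 3 1 * (xEl 3 2)⁻¹
    rw [show xEl 3 2 = xEl 3 0 * aEl 3 1 * aEl 3 2 by rw [xEl_succ, xEl_succ], h,
      show (betaSeq 3 0 : ↥(treeGroup 3)) = 1 from rfl, mul_one]
  | j + 3, _ =>
    set N := j + 4 with hN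
    have hc := comm_key (N := N) (k := j + 2) (by omega) (xEl N (j + 2))
      ((xEl N j * betaSeq N j) * aEl N (j + 2))
      (fixHi_xEl (j + 2) (by omega))
      (by
        push_cast
        refine FixHi.mul (FixHi.mul (fixHi_xEl j (by omega)) (fixHi_betaSeq j (by omega)))
          (fixHi_aPerm (by omega)))
    have hstep : N - (j + 2) + 1 = N - (j + 1) := by omega
    rw [show xEl N (j + 2) = xEl N (j + 1) * aEl N (j + 2) from xEl_succ N (j + 1)] at hc
    have h := grpLem (xEl N (j + 1)) (aEl N (j + 2)) (aEl N (j + 3)) (xEl N j * betaSeq N j)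
      (aEl_mul_self N (j + 2)) (aEl_mul_self N (j + 3)) hc
    show xEl N (j + 1) * betaSeq N (j + 1) * aEl N (j + 3)
      = (xEl N (j + 3)) ^ 2 * (xEl N j * betaSeq N j * aEl N (j + 2)) * (xEl N (j + 3))⁻¹
    rw [show xEl N (j + 3) = xEl N (j + 1) * aEl N (j + 2) * aEl N (j + 3) by
      rw [xEl_succ, xEl_succ], h]
    rfl
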